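/- There exists a constant C = C(m, C0) such that for all integers L, l ≥ 0, 0 ≤ K < 2^L and 0 ≤ k < 2^l, writing ψ_{n,lk} = ∫_0^1 ψ_{LK}(x)·ψ_{lk}(x)/M0(x) dx, the following hold: (a) if l ≤ L then |ψ_{n,lk}| ≤ C·2^{−(L−l)/2}; (b) if (l,k) ≠ (L,K) and the supports I^l_k and I^L_K intersect, then |ψ_{n,lk}| ≤ C·2^{L/2 − 3l/2}; (c) if the supports I^l_k and I^L_K are disjoint, then ψ_{n,lk} = 0. -/

import Mathlib

open MeasureTheory Real Set

noncomputable section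

/-- The Haar mother wavelet `ψ = 1_{(0,1/2]} − 1_{(1/2,1]}`. -/
def haarMother (x : ℝ) : ℝ :=
  (Set.Ioc (0:ℝ) (1/2)).indicator (fun _ => (1:ℝ)) x
    - (Set.Ioc (1/2:ℝ) 1).indicator (fun _ => (1:ℝ)) x

/-- The Haar wavelet `ψ_{lk}(x) = 2^{l/2} ψ(2^l x − k)`. -/
def haarPsi (l k : ℕ) (x : ℝ) : ℝ :=
  (2:ℝ) ^ ((l:ℝ) / 2) * haarMother ((2:ℝ) ^ l * x - k)

/-- The dyadic interval `I^l_k = (k 2^{−l}, (k+1) 2^{−l}]`. -/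
def dyadicI (l k : ℕ) : Set ℝ := Set.Ioc ((k:ℝ) / 2 ^ l) (((k:ℝ) + 1) / 2 ^ l)

/-- `f ∈ V_L`: `f` is constant on each dyadic interval `I^{L+1}_j`, `0 ≤ j < 2^{L+1}`. -/
def MemV (L : ℕ) (f : ℝ → ℝ) : Prop :=
  ∀ j < 2 ^ (L + 1), ∀ x ∈ dyadicI (L + 1) j, ∀ y ∈ dyadicI (L + 1) j, f x = f y

/-- The `L²`-orthogonal projection onto `V_L`: on each dyadic interval `I^{L+1}_j`,
`(P_L f)(x)` is the average `2^{L+1} ∫_{I^{L+1}_j} f`. -/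
def dyadicProj (L : ℕ) (f : ℝ → ℝ) (x : ℝ) : ℝ :=
  (2:ℝ) ^ (L + 1) *
    ∫ t in (((⌈(2:ℝ) ^ (L + 1) * x⌉ - 1 : ℤ) : ℝ) / 2 ^ (L + 1))..
        (((⌈(2:ℝ) ^ (L + 1) * x⌉ : ℤ) : ℝ) / 2 ^ (L + 1)), f t

/-- The multiscale metric
`ℓ∞(f,g) = |⟨f−g, φ⟩| + Σ_{l≥0} 2^{l/2} max_{0≤k<2^l} |⟨f−g, ψ_{lk}⟩|`. -/
def ellInfinity (f g : ℝ → ℝ) : ℝ :=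
  |∫ x in (0:ℝ)..1, (f x - g x)| +
    ∑' l : ℕ, (2:ℝ) ^ ((l:ℝ) / 2) *
      ⨆ k : Fin (2 ^ l), |∫ x in (0:ℝ)..1, (f x - g x) * haarPsi l k x|

/-- The Hölder ball `H(β,D)` on `[0,1]` (for `0 < β ≤ 1`). -/
def HolderC (β D : ℝ) (f : ℝ → ℝ) : Prop :=
  ∀ x ∈ Set.Icc (0:ℝ) 1, ∀ y ∈ Set.Icc (0:ℝ) 1, |f x - f y| ≤ D * |x - y| ^ β

lemma haarMother_abs_le (t : ℝ) : |haarMother t| ≤ 1 := by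
  unfold haarMother
  rw [Set.indicator_apply, Set.indicator_apply]
  split_ifs <;> norm_num

lemma haarMother_measurable : Measurable haarMother := by
  unfold haarMother
  exact ((measurable_const.indicator measurableSet_Ioc).sub
    (measurable_const.indicator measurableSet_Ioc))

lemma haarMother_eq_zero {t : ℝ} (h : t ∉ Set.Ioc (0:ℝ) 1) : haarMother t = 0 := by
  unfold haarMother
  rw [Set.mem_Ioc, not_and_or, not_lt, not_le] at h
  have h1 : t ∉ Set.Ioc (0:ℝ) (1/2) := by
    rw [Set.mem_Ioc]; rcases h with h | h <;> intro hc <;> [linarith [hc.1]; linarith [hc.2]]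
  have h2 : t ∉ Set.Ioc (1/2:ℝ) 1 := by
    rw [Set.mem_Ioc]; rcases h with h | h <;> intro hc <;> [linarith [hc.1]; linarith [hc.2]]
  rw [Set.indicator_of_notMem h1, Set.indicator_of_notMem h2, sub_zero]

lemma two_pow_pos' (l : ℕ) : (0:ℝ) < 2 ^ l := by positivity

lemma haarPsi_measurable (l k : ℕ) : Measurable (haarPsi l k) := by
  unfold haarPsi
  exact measurable_const.mul (haarMother_measurable.comp (by fun_prop))

lemma haarPsi_abs_le (l k : ℕ) (x : ℝ) : |haarPsi l k x| ≤ (2:ℝ) ^ ((l:ℝ)/2) := by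
  unfold haarPsi
  rw [abs_mul, abs_of_pos (by positivity : (0:ℝ) < (2:ℝ) ^ ((l:ℝ)/2))]
  calc (2:ℝ) ^ ((l:ℝ)/2) * |haarMother ((2:ℝ)^l * x - k)|
      ≤ (2:ℝ) ^ ((l:ℝ)/2) * 1 := by
        exact mul_le_mul_of_nonneg_left (haarMother_abs_le _) (by positivity)
    _ = _ := mul_one _

lemma haarPsi_support {l k : ℕ} {x : ℝ} (h : haarPsi l k x ≠ 0) : x ∈ dyadicI l k := by
  unfold haarPsi at h
  have hM : haarMother ((2:ℝ)^l * x - k) ≠ 0 := by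
    intro h0; rw [h0, mul_zero] at h; exact h rfl
  have ht : (2:ℝ)^l * x - k ∈ Set.Ioc (0:ℝ) 1 := by
    by_contra hc; exact hM (haarMother_eq_zero hc)
  rw [Set.mem_Ioc] at ht
  have hp := two_pow_pos' l
  constructor
  · rw [div_lt_iff₀ hp]; nlinarith [ht.1]
  · rw [le_div_iff₀ hp]; nlinarith [ht.2]

lemma dyadicI_subset (l k : ℕ) (hk : k < 2^l) : dyadicI l k ⊆ Set.Ioc (0:ℝ) 1 := by
  intro x hx
  have hp := two_pow_pos' l
  have hk' : (k:ℝ) + 1 ≤ 2^l := by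
    have : (k:ℝ) + 1 ≤ (2^l : ℕ) := by exact_mod_cast Nat.succ_le_of_lt hk
    simpa using this
  obtain ⟨h1, h2⟩ := hx
  constructor
  · calc (0:ℝ) ≤ (k:ℝ)/2^l := by positivity
      _ < x := h1
  · calc x ≤ ((k:ℝ)+1)/2^l := h2
      _ ≤ 1 := by rw [div_le_one hp]; exact hk'

lemma dyadicI_disjoint {l k K : ℕ} (h : k ≠ K) : dyadicI l k ∩ dyadicI l K = ∅ := by
  ext x
  simp only [Set.mem_inter_iff, Set.mem_empty_iff_false, iff_false]
  rintro ⟨⟨h1, h2⟩, ⟨h3, h4⟩⟩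
  have hp := two_pow_pos' l
  rw [div_lt_iff₀ hp] at h1 h3
  rw [le_div_iff₀ hp] at h2 h4
  have hkK : (k:ℝ) < K + 1 := by linarith
  have hKk : (K:ℝ) < k + 1 := by linarith
  have : k < K + 1 := by exact_mod_cast hkK
  have : K < k + 1 := by exact_mod_cast hKk
  omega

/-- Integrability of a measurable function bounded on `Ioc 0 1`, supported in `Ioc 0 1`. -/
lemma integrableOn_of_bound {f : ℝ → ℝ} (hf : Measurable f) {B : ℝ}
    (h : ∀ x ∈ Set.Ioc (0:ℝ) 1, |f x| ≤ B) :
    MeasureTheory.IntegrableOn f (Set.Ioc (0:ℝ) 1) := by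
  apply MeasureTheory.Integrable.mono' (g := fun _ => B)
  · exact MeasureTheory.integrable_const _
  · exact hf.aestronglyMeasurable
  · rw [MeasureTheory.ae_restrict_iff' measurableSet_Ioc]
    exact Filter.Eventually.of_forall fun x hx => by
      simpa [Real.norm_eq_abs] using h x hx

/-- Master bound: a function supported in `Ioc a b ⊆ Ioc 0 1` and bounded by `B` there. -/
lemma abs_intervalIntegral_le {f : ℝ → ℝ} {a b B : ℝ}
    (hab : a ≤ b) (ha : 0 ≤ a) (hb : b ≤ 1)
    (hsupp : ∀ x, f x ≠ 0 → x ∈ Set.Ioc a b)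
    (hbound : ∀ x ∈ Set.Ioc a b, |f x| ≤ B) :
    |∫ x in (0:ℝ)..1, f x| ≤ B * (b - a) := by
  have hsub : Set.Ioc a b ⊆ Set.Ioc 0 1 := Set.Ioc_subset_Ioc ha hb
  have hfeq : f = (Set.Ioc a b).indicator f := by
    funext x
    by_cases hx : x ∈ Set.Ioc a b
    · rw [Set.indicator_of_mem hx]
    · rw [Set.indicator_of_notMem hx]
      by_contra h0
      exact hx (hsupp x h0)
  rw [intervalIntegral.integral_of_le (by norm_num : (0:ℝ) ≤ 1)]
  conv_lhs => rw [hfeq]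
  rw [MeasureTheory.setIntegral_indicator measurableSet_Ioc,
    Set.inter_eq_self_of_subset_right hsub]
  have key := MeasureTheory.norm_setIntegral_le_of_norm_le_const_ae'
    (μ := volume) (s := Set.Ioc a b) (f := f) (C := B)
    (by simp [Real.volume_Ioc])
    (Filter.Eventually.of_forall fun x hx => by
      simpa [Real.norm_eq_abs] using hbound x hx)
  rw [Real.norm_eq_abs] at key
  calc |∫ x in Set.Ioc a b, f x| ≤ B * (volume (Set.Ioc a b)).toReal := key
    _ = B * (b - a) := by rw [Real.volume_Ioc, ENNReal.toReal_ofReal (by linarith)]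

/-- `haarMother` is constant on each dyadic interval `(j/2^s, (j+1)/2^s]` with `s ≥ 1`. -/
lemma haarMother_const_on (s : ℕ) (hs : 1 ≤ s) (j : ℤ) :
    ∃ c : ℝ, |c| ≤ 1 ∧ ∀ t ∈ Set.Ioc ((j:ℝ)/2^s) (((j:ℝ)+1)/2^s), haarMother t = c := by
  set N : ℕ := 2^(s-1) with hN
  have hN1 : 1 ≤ N := Nat.one_le_two_pow
  have h2s : (2:ℝ)^s = 2 * (N:ℝ) := by
    have hnat : (2:ℕ)^s = 2 * N := by
      rw [hN, ← pow_succ']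
      congr 1
      omega
    exact_mod_cast hnat
  have hp : (0:ℝ) < 2^s := by positivity
  have hNhalf : (N:ℝ)/2^s = 1/2 := by
    rw [h2s]
    have : (0:ℝ) < (N:ℝ) := by exact_mod_cast hN1
    field_simp
  have h2None : (2*(N:ℝ))/2^s = 1 := by
    rw [h2s]; field_simp
  rcases (by omega : j + 1 ≤ 0 ∨ (0 ≤ j ∧ j + 1 ≤ (N:ℤ)) ∨ ((N:ℤ) ≤ j ∧ j + 1 ≤ 2*(N:ℤ))
      ∨ 2*(N:ℤ) ≤ j) with h | ⟨h1, h2⟩ | ⟨h1, h2⟩ | h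
  · refine ⟨0, by norm_num, fun t ht => haarMother_eq_zero ?_⟩
    intro hc
    have hj1 : ((j:ℝ)+1) ≤ 0 := by exact_mod_cast h
    have : t ≤ 0 := le_trans ht.2 (div_nonpos_iff.2 (Or.inr ⟨hj1, le_of_lt hp⟩))
    linarith [hc.1]
  · refine ⟨1, by norm_num, fun t ht => ?_⟩
    have hj0 : (0:ℝ) ≤ (j:ℝ) := by exact_mod_cast h1
    have hjN : ((j:ℝ)+1) ≤ (N:ℝ) := by exact_mod_cast h2
    have ht1 : 0 < t := lt_of_le_of_lt (by positivity : (0:ℝ) ≤ (j:ℝ)/2^s) ht.1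
    have ht2 : t ≤ 1/2 := le_trans ht.2 (by
      rw [← hNhalf]
      exact div_le_div_of_nonneg_right hjN hp.le)
    unfold haarMother
    rw [Set.indicator_of_mem (Set.mem_Ioc.mpr ⟨ht1, ht2⟩), Set.indicator_of_notMem (by
      rw [Set.mem_Ioc]; intro hc; linarith [hc.1]), sub_zero]
  · refine ⟨-1, by norm_num, fun t ht => ?_⟩
    have hjN : (N:ℝ) ≤ (j:ℝ) := by exact_mod_cast h1
    have hj2N : ((j:ℝ)+1) ≤ 2*(N:ℝ) := by exact_mod_cast h2
    have ht1 : 1/2 < t := by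
      rw [← hNhalf]
      exact lt_of_le_of_lt (div_le_div_of_nonneg_right hjN hp.le) ht.1
    have ht2 : t ≤ 1 := by
      rw [← h2None]
      exact le_trans ht.2 (div_le_div_of_nonneg_right hj2N hp.le)
    unfold haarMother
    rw [Set.indicator_of_notMem (by
      rw [Set.mem_Ioc]; intro hc; linarith [hc.2]), Set.indicator_of_mem
      (Set.mem_Ioc.mpr ⟨ht1, ht2⟩), zero_sub]
  · refine ⟨0, by norm_num, fun t ht => haarMother_eq_zero ?_⟩
    intro hc
    have hj : 2*(N:ℝ) ≤ (j:ℝ) := by exact_mod_cast h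
    have : 1 < t := by
      rw [← h2None]
      exact lt_of_le_of_lt (div_le_div_of_nonneg_right hj hp.le) ht.1
    linarith [hc.2]

/-- A coarser Haar wavelet is constant on a finer dyadic interval. -/
lemma haarPsi_const_on {l L k K : ℕ} (h : l < L) :
    ∃ c : ℝ, |c| ≤ (2:ℝ)^((l:ℝ)/2) ∧ ∀ x ∈ dyadicI L K, haarPsi l k x = c := by
  set s : ℕ := L - l with hsdef
  have hs : 1 ≤ s := by omega
  set j : ℤ := (K:ℤ) - (k:ℤ) * 2^s with hjdef
  obtain ⟨c0, hc0, hconst⟩ := haarMother_const_on s hs j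
  refine ⟨(2:ℝ)^((l:ℝ)/2) * c0, ?_, fun x hx => ?_⟩
  · rw [abs_mul, abs_of_pos (by positivity : (0:ℝ) < (2:ℝ)^((l:ℝ)/2))]
    calc (2:ℝ)^((l:ℝ)/2) * |c0| ≤ (2:ℝ)^((l:ℝ)/2) * 1 :=
        mul_le_mul_of_nonneg_left hc0 (by positivity)
      _ = _ := mul_one _
  · unfold haarPsi
    congr 1
    apply hconst
    have hL : (2:ℝ)^L = 2^l * 2^s := by rw [← pow_add]; congr 1; omega
    have hjr : (j:ℝ) = (K:ℝ) - (k:ℝ) * 2^s := by rw [hjdef]; push_cast; ring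
    have hpl : (0:ℝ) < 2^l := by positivity
    have hps : (0:ℝ) < 2^s := by positivity
    have hpL : (0:ℝ) < 2^L := by positivity
    obtain ⟨h1, h2⟩ := hx
    rw [div_lt_iff₀ hpL] at h1
    rw [le_div_iff₀ hpL] at h2
    rw [hL] at h1 h2
    constructor
    · rw [div_lt_iff₀ hps, hjr]
      nlinarith
    · rw [le_div_iff₀ hps, hjr]
      nlinarith

/-- The Haar wavelet integrates to zero. -/
lemma integral_haarPsi_zero (L K : ℕ) (hK : K < 2^L) :
    ∫ x in (0:ℝ)..1, haarPsi L K x = 0 := by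
  have hpL : (0:ℝ) < 2^L := by positivity
  set a : ℝ := (K:ℝ)/2^L with ha
  set mid : ℝ := ((K:ℝ) + 1/2)/2^L with hmid
  set b : ℝ := ((K:ℝ)+1)/2^L with hb
  have hK1 : (K:ℝ) + 1 ≤ 2^L := by
    have : ((K:ℕ):ℝ) + 1 ≤ ((2^L : ℕ):ℝ) := by exact_mod_cast Nat.succ_le_of_lt hK
    simpa using this
  have hamid : a ≤ mid := by
    apply div_le_div_of_nonneg_right _ hpL.le; linarith
  have hmidb : mid ≤ b := by
    apply div_le_div_of_nonneg_right _ hpL.le; linarith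
  have ha0 : 0 ≤ a := by positivity
  have hb1 : b ≤ 1 := by rw [hb, div_le_one hpL]; exact hK1
  have hpoint : ∀ x : ℝ, haarPsi L K x = (2:ℝ)^((L:ℝ)/2) *
      ((Set.Ioc a mid).indicator (fun _ => (1:ℝ)) x
        - (Set.Ioc mid b).indicator (fun _ => (1:ℝ)) x) := by
    intro x
    unfold haarPsi haarMother
    congr 1
    have e1 : ((2:ℝ)^L * x - K ∈ Set.Ioc (0:ℝ) (1/2)) ↔ x ∈ Set.Ioc a mid := by
      rw [Set.mem_Ioc, Set.mem_Ioc, ha, hmid, div_lt_iff₀ hpL, le_div_iff₀ hpL]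
      constructor <;> rintro ⟨u, v⟩ <;> constructor <;> nlinarith
    have e2 : ((2:ℝ)^L * x - K ∈ Set.Ioc (1/2:ℝ) 1) ↔ x ∈ Set.Ioc mid b := by
      rw [Set.mem_Ioc, Set.mem_Ioc, hmid, hb, div_lt_iff₀ hpL, le_div_iff₀ hpL]
      constructor <;> rintro ⟨u, v⟩ <;> constructor <;> nlinarith
    simp only [Set.indicator_apply]
    rw [if_congr e1 rfl rfl, if_congr e2 rfl rfl]
  have hint : ∀ (c d : ℝ), 0 ≤ c → c ≤ d → d ≤ 1 →
      (∫ x in (0:ℝ)..1, (Set.Ioc c d).indicator (fun _ => (1:ℝ)) x) = d - c := by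
    intro c d hc hcd hd1
    rw [intervalIntegral.integral_of_le (by norm_num : (0:ℝ) ≤ 1),
      MeasureTheory.setIntegral_indicator measurableSet_Ioc,
      Set.inter_eq_self_of_subset_right (Set.Ioc_subset_Ioc hc hd1),
      MeasureTheory.setIntegral_const, Real.volume_real_Ioc_of_le hcd]
    simp
  have hii : ∀ (c d : ℝ), IntervalIntegrable
      ((Set.Ioc c d).indicator (fun _ => (1:ℝ))) volume 0 1 := by
    intro c d
    apply MeasureTheory.Integrable.intervalIntegrable
    rw [MeasureTheory.integrable_indicator_iff measurableSet_Ioc]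
    exact MeasureTheory.integrableOn_const measure_Ioc_lt_top.ne
  have : (fun x => haarPsi L K x) = fun x => (2:ℝ)^((L:ℝ)/2) *
      ((Set.Ioc a mid).indicator (fun _ => (1:ℝ)) x
        - (Set.Ioc mid b).indicator (fun _ => (1:ℝ)) x) := funext hpoint
  rw [this, intervalIntegral.integral_const_mul,
    intervalIntegral.integral_sub (hii a mid) (hii mid b),
    hint a mid ha0 hamid (le_trans hmidb hb1),
    hint mid b (le_trans ha0 hamid) hmidb hb1]
  have : mid - a - (b - mid) = 0 := by
    rw [ha, hmid, hb]
    field_simp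
    ring
  rw [this, mul_zero]

lemma rpow_nat_inv' (n : ℕ) : ((2:ℝ)^n)⁻¹ = (2:ℝ)^(-(n:ℝ)) := by
  rw [← Real.rpow_natCast 2 n, ← Real.rpow_neg (by norm_num)]

lemma abs_one_div_M0_le {m : ℝ} (hm : 0 < m) {M0 : ℝ → ℝ} {x : ℝ}
    (h : m ≤ M0 x) : |1 / M0 x| ≤ 1 / m := by
  have h0 : 0 < M0 x := lt_of_lt_of_le hm h
  rw [abs_of_pos (by positivity)]
  exact one_div_le_one_div_of_le hm h

lemma core {m C0 : ℝ} (hm : 0 < m) (hC0 : 0 < C0) {M0 : ℝ → ℝ} (hM0 : Measurable M0)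
    (hbnd : ∀ u ∈ Set.Icc (0:ℝ) 1, m ≤ M0 u ∧ M0 u ≤ 1)
    (hlip : LipschitzOnWith (Real.toNNReal C0) (fun u => 1 / M0 u) (Set.Icc 0 1))
    {L K l k : ℕ} (hK : K < 2^L) (hlL : l < L) :
    |∫ x in (0:ℝ)..1, haarPsi l k x * haarPsi L K x / M0 x|
      ≤ C0 * ((2:ℝ)^((l:ℝ)/2) * (2:ℝ)^((L:ℝ)/2) * ((2:ℝ)^L)⁻¹ * ((2:ℝ)^L)⁻¹) := by
  have hpL : (0:ℝ) < 2^L := by positivity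
  set a : ℝ := (K:ℝ)/2^L with ha
  set b : ℝ := ((K:ℝ)+1)/2^L with hb
  have hK1 : (K:ℝ) + 1 ≤ 2^L := by
    have : ((K:ℕ):ℝ) + 1 ≤ ((2^L : ℕ):ℝ) := by exact_mod_cast Nat.succ_le_of_lt hK
    simpa using this
  have hdy : dyadicI L K = Set.Ioc a b := rfl
  have hab : a ≤ b := div_le_div_of_nonneg_right (by linarith) hpL.le
  have ha0 : 0 ≤ a := by positivity
  have hb1 : b ≤ 1 := by rw [hb, div_le_one hpL]; exact hK1
  have haIcc : a ∈ Set.Icc (0:ℝ) 1 := ⟨ha0, le_trans hab hb1⟩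
  have hsubIcc : Set.Ioc a b ⊆ Set.Icc (0:ℝ) 1 := fun x hx => ⟨le_trans ha0 hx.1.le, le_trans hx.2 hb1⟩
  have hba : b - a = ((2:ℝ)^L)⁻¹ := by rw [ha, hb]; field_simp; ring
  obtain ⟨c, hc, hconst⟩ := haarPsi_const_on (k := k) (K := K) hlL
  set ga : ℝ := 1 / M0 a with hga
  have hpt : ∀ x : ℝ, haarPsi l k x * haarPsi L K x / M0 x
      = c * (haarPsi L K x * (1/M0 x - ga)) + (c * ga) * haarPsi L K x := by
    intro x
    by_cases hx : haarPsi L K x = 0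
    · rw [hx]; simp
    · rw [hconst x (hdy ▸ haarPsi_support hx)]
      ring
  have hmeas1 : Measurable fun x => c * (haarPsi L K x * (1/M0 x - ga)) :=
    measurable_const.mul ((haarPsi_measurable L K).mul
      ((measurable_const.div hM0).sub measurable_const))
  have hga_le : |ga| ≤ 1/m := abs_one_div_M0_le hm (hbnd a haIcc).1
  have hii1 : IntervalIntegrable (fun x => c * (haarPsi L K x * (1/M0 x - ga))) volume 0 1 := by
    rw [intervalIntegrable_iff_integrableOn_Ioc_of_le (by norm_num)]
    apply integrableOn_of_bound hmeas1 (B := |c| * ((2:ℝ)^((L:ℝ)/2) * (1/m + 1/m)))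
    intro x hx
    have hxIcc : x ∈ Set.Icc (0:ℝ) 1 := ⟨hx.1.le, hx.2⟩
    rw [abs_mul, abs_mul]
    gcongr
    · exact haarPsi_abs_le L K x
    · calc |1/M0 x - ga| ≤ |1/M0 x| + |ga| := abs_sub _ _
        _ ≤ 1/m + 1/m := add_le_add (abs_one_div_M0_le hm (hbnd x hxIcc).1) hga_le
  have hii2 : IntervalIntegrable (fun x => (c * ga) * haarPsi L K x) volume 0 1 := by
    rw [intervalIntegrable_iff_integrableOn_Ioc_of_le (by norm_num)]
    apply integrableOn_of_bound (measurable_const.mul (haarPsi_measurable L K))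
      (B := |c * ga| * (2:ℝ)^((L:ℝ)/2))
    intro x _
    rw [abs_mul]
    exact (show |c * ga * haarPsi L K x| ≤ |c| * |ga| * _ by
      rw [abs_mul, abs_mul]
      exact mul_le_mul_of_nonneg_left (haarPsi_abs_le L K x) (by positivity))
  have hsplit : (∫ x in (0:ℝ)..1, haarPsi l k x * haarPsi L K x / M0 x)
      = c * ∫ x in (0:ℝ)..1, haarPsi L K x * (1/M0 x - ga) := by
    simp only [hpt]
    rw [intervalIntegral.integral_add hii1 hii2, intervalIntegral.integral_const_mul,
      intervalIntegral.integral_const_mul, integral_haarPsi_zero L K hK, mul_zero, add_zero]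
  rw [hsplit, abs_mul]
  have hkey : |∫ x in (0:ℝ)..1, haarPsi L K x * (1/M0 x - ga)|
      ≤ ((2:ℝ)^((L:ℝ)/2) * (C0 * ((2:ℝ)^L)⁻¹)) * (b - a) := by
    apply abs_intervalIntegral_le hab ha0 hb1
    · intro x h0
      apply hdy ▸ haarPsi_support (l := L) (k := K)
      intro hc0
      rw [hc0, zero_mul] at h0
      exact h0 rfl
    · intro x hx
      rw [abs_mul]
      gcongr
      · exact haarPsi_abs_le L K x
      · have hd := LipschitzOnWith.dist_le_mul hlip x (hsubIcc hx) a haIcc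
        rw [Real.dist_eq, Real.dist_eq, Real.coe_toNNReal C0 hC0.le] at hd
        calc |1/M0 x - ga| ≤ C0 * |x - a| := hd
          _ ≤ C0 * ((2:ℝ)^L)⁻¹ := by
              apply mul_le_mul_of_nonneg_left _ hC0.le
              rw [abs_of_nonneg (by linarith [hx.1.le] : (0:ℝ) ≤ x - a), ← hba]
              linarith [hx.2]
  calc |c| * |∫ x in (0:ℝ)..1, haarPsi L K x * (1/M0 x - ga)|
      ≤ (2:ℝ)^((l:ℝ)/2) * (((2:ℝ)^((L:ℝ)/2) * (C0 * ((2:ℝ)^L)⁻¹)) * (b - a)) := by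
        apply mul_le_mul hc hkey (abs_nonneg _) (by positivity)
    _ = C0 * ((2:ℝ)^((l:ℝ)/2) * (2:ℝ)^((L:ℝ)/2) * ((2:ℝ)^L)⁻¹ * ((2:ℝ)^L)⁻¹) := by
        rw [hba]; ring

lemma pow_combine3 (u v : ℝ) (n : ℕ) :
    (2:ℝ)^u * (2:ℝ)^v * ((2:ℝ)^n)⁻¹ = (2:ℝ)^(u + v - (n:ℝ)) := by
  rw [rpow_nat_inv', ← Real.rpow_add (by norm_num : (0:ℝ) < 2),
    ← Real.rpow_add (by norm_num : (0:ℝ) < 2)]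
  congr 1

lemma pow_combine4 (u v : ℝ) (n n' : ℕ) :
    (2:ℝ)^u * (2:ℝ)^v * ((2:ℝ)^n)⁻¹ * ((2:ℝ)^n')⁻¹ = (2:ℝ)^(u + v - (n:ℝ) - (n':ℝ)) := by
  rw [rpow_nat_inv', rpow_nat_inv', ← Real.rpow_add (by norm_num : (0:ℝ) < 2),
    ← Real.rpow_add (by norm_num : (0:ℝ) < 2), ← Real.rpow_add (by norm_num : (0:ℝ) < 2)]
  congr 1


/-- Wavelet coefficients of `ψ_{LK}/M0`: decay bounds on
`ψ_{n,lk} = ∫_0^1 ψ_{LK} ψ_{lk} / M0`, with a constant depending only on the lower bound `m`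
of `M0` and the Lipschitz constant `C0` of `1/M0`. -/
theorem haar_coeff_decay_of_psiLK_div_M0
    (m C0 : ℝ) (hm : 0 < m) (hC0 : 0 < C0) :
    ∃ C : ℝ, 0 < C ∧
      ∀ M0 : ℝ → ℝ, Measurable M0 →
        (∀ u ∈ Set.Icc (0:ℝ) 1, m ≤ M0 u ∧ M0 u ≤ 1) →
        LipschitzOnWith (Real.toNNReal C0) (fun u => 1 / M0 u) (Set.Icc 0 1) →
        ∀ L l K k : ℕ, K < 2 ^ L → k < 2 ^ l →
          (l ≤ L →
            |∫ x in (0:ℝ)..1, haarPsi L K x * haarPsi l k x / M0 x|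
              ≤ C * (2:ℝ) ^ (-(((L:ℝ) - (l:ℝ)) / 2))) ∧
          ((l, k) ≠ (L, K) → (dyadicI l k ∩ dyadicI L K).Nonempty →
            |∫ x in (0:ℝ)..1, haarPsi L K x * haarPsi l k x / M0 x|
              ≤ C * (2:ℝ) ^ ((L:ℝ)/2 - 3*(l:ℝ)/2)) ∧
          (dyadicI l k ∩ dyadicI L K = ∅ →
            (∫ x in (0:ℝ)..1, haarPsi L K x * haarPsi l k x / M0 x) = 0) := by
  refine ⟨1/m + C0 + 1, by positivity, ?_⟩
  intro M0 hM0 hbnd hlip L l K k hK hk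
  refine ⟨?_, ?_, ?_⟩
  · -- (a) crude bound
    intro hlL
    have hpL : (0:ℝ) < 2^L := by positivity
    have hK1 : (K:ℝ) + 1 ≤ 2^L := by
      have : ((K:ℕ):ℝ) + 1 ≤ ((2^L : ℕ):ℝ) := by exact_mod_cast Nat.succ_le_of_lt hK
      simpa using this
    have hab : (K:ℝ)/2^L ≤ ((K:ℝ)+1)/2^L := div_le_div_of_nonneg_right (by linarith) hpL.le
    have ha0 : (0:ℝ) ≤ (K:ℝ)/2^L := by positivity
    have hb1 : ((K:ℝ)+1)/2^L ≤ 1 := by rw [div_le_one hpL]; exact hK1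
    have hba : ((K:ℝ)+1)/2^L - (K:ℝ)/2^L = ((2:ℝ)^L)⁻¹ := by field_simp; ring
    have hbd := abs_intervalIntegral_le
      (f := fun x => haarPsi L K x * haarPsi l k x / M0 x)
      (B := ((2:ℝ)^((L:ℝ)/2) * (2:ℝ)^((l:ℝ)/2)) / m) hab ha0 hb1
      (fun x h0 => haarPsi_support (l := L) (k := K)
        (fun hc0 => h0 (by simp [hc0])))
      (fun x hx => by
        have hxIcc : x ∈ Set.Icc (0:ℝ) 1 := by
          constructor
          · exact le_trans ha0 hx.1.le
          · exact le_trans hx.2 hb1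
        have hMx : m ≤ M0 x := (hbnd x hxIcc).1
        have h3 : m ≤ |M0 x| := by
          rw [abs_of_pos (lt_of_lt_of_le hm hMx)]; exact hMx
        rw [abs_div, abs_mul]
        exact div_le_div₀ (by positivity)
          (mul_le_mul (haarPsi_abs_le L K x) (haarPsi_abs_le l k x)
            (abs_nonneg _) (by positivity)) hm h3)
    calc |∫ x in (0:ℝ)..1, haarPsi L K x * haarPsi l k x / M0 x|
        ≤ ((2:ℝ)^((L:ℝ)/2) * (2:ℝ)^((l:ℝ)/2)) / m * (((K:ℝ)+1)/2^L - (K:ℝ)/2^L) := hbd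
      _ = (1/m) * ((2:ℝ)^((L:ℝ)/2) * (2:ℝ)^((l:ℝ)/2) * ((2:ℝ)^L)⁻¹) := by rw [hba]; ring
      _ = (1/m) * (2:ℝ)^(-(((L:ℝ) - (l:ℝ))/2)) := by
          rw [pow_combine3, show (L:ℝ)/2 + (l:ℝ)/2 - (L:ℝ) = -(((L:ℝ) - (l:ℝ))/2) by ring]
      _ ≤ (1/m + C0 + 1) * (2:ℝ)^(-(((L:ℝ) - (l:ℝ))/2)) := by
          apply mul_le_mul_of_nonneg_right (by linarith) (by positivity)
  · -- (b)
    intro hne hnonempty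
    rcases lt_trichotomy l L with hlt | heq | hgt
    · have hco := core hm hC0 hM0 hbnd hlip (k := k) hK hlt
      have e : (fun x => haarPsi L K x * haarPsi l k x / M0 x)
          = fun x => haarPsi l k x * haarPsi L K x / M0 x := by
        funext x; rw [mul_comm (haarPsi L K x)]
      rw [show (∫ x in (0:ℝ)..1, haarPsi L K x * haarPsi l k x / M0 x)
          = ∫ x in (0:ℝ)..1, haarPsi l k x * haarPsi L K x / M0 x from by rw [e]]
      have hlL : (l:ℝ) ≤ (L:ℝ) := by exact_mod_cast hlt.le
      calc |∫ x in (0:ℝ)..1, haarPsi l k x * haarPsi L K x / M0 x|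
          ≤ C0 * ((2:ℝ)^((l:ℝ)/2) * (2:ℝ)^((L:ℝ)/2) * ((2:ℝ)^L)⁻¹ * ((2:ℝ)^L)⁻¹) := hco
        _ = C0 * (2:ℝ)^((l:ℝ)/2 + (L:ℝ)/2 - (L:ℝ) - (L:ℝ)) := by rw [pow_combine4]
        _ ≤ C0 * (2:ℝ)^((L:ℝ)/2 - 3*(l:ℝ)/2) := by
            apply mul_le_mul_of_nonneg_left _ hC0.le
            apply Real.rpow_le_rpow_of_exponent_le one_le_two
            linarith
        _ ≤ (1/m + C0 + 1) * (2:ℝ)^((L:ℝ)/2 - 3*(l:ℝ)/2) := by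
            apply mul_le_mul_of_nonneg_right _ (by positivity)
            have : 0 < 1/m := by positivity
            linarith
    · subst heq
      have hkK : k ≠ K := by
        intro h
        exact hne (by rw [h])
      rw [dyadicI_disjoint hkK] at hnonempty
      exact absurd hnonempty (by simp)
    · have hco := core (L := l) (K := k) (l := L) (k := K) hm hC0 hM0 hbnd hlip hk hgt
      calc |∫ x in (0:ℝ)..1, haarPsi L K x * haarPsi l k x / M0 x|
          ≤ C0 * ((2:ℝ)^((L:ℝ)/2) * (2:ℝ)^((l:ℝ)/2) * ((2:ℝ)^l)⁻¹ * ((2:ℝ)^l)⁻¹) := hco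
        _ = C0 * (2:ℝ)^((L:ℝ)/2 - 3*(l:ℝ)/2) := by
            rw [pow_combine4, show (L:ℝ)/2 + (l:ℝ)/2 - (l:ℝ) - (l:ℝ)
              = (L:ℝ)/2 - 3*(l:ℝ)/2 by ring]
        _ ≤ (1/m + C0 + 1) * (2:ℝ)^((L:ℝ)/2 - 3*(l:ℝ)/2) := by
            apply mul_le_mul_of_nonneg_right _ (by positivity)
            have : 0 < 1/m := by positivity
            linarith
  · -- (c)
    intro hdisj
    have hz : ∀ x : ℝ, haarPsi L K x * haarPsi l k x / M0 x = 0 := by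
      intro x
      by_cases h1 : haarPsi L K x = 0
      · rw [h1, zero_mul, zero_div]
      by_cases h2 : haarPsi l k x = 0
      · rw [h2, mul_zero, zero_div]
      exfalso
      have hx : x ∈ dyadicI l k ∩ dyadicI L K :=
        Set.mem_inter (haarPsi_support h2) (haarPsi_support h1)
      rw [hdisj] at hx
      exact hx
    simp only [hz, intervalIntegral.integral_zero]
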